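/- If P is a downset of finite words over a finite alphabet A in the subword ordering (the contiguous-factor ordering), then either f_P(n) is bounded, or f_P(n) ≥ n + 1 for every n ∈ ℕ. -/

import Mathlib

namespace Stmt14

variable {A : Type*}

/-- the length-`m` window of a bi-infinite word `z` at position `t` -/
def win (z : ℤ → A) (m : ℕ) (t : ℤ) : Fin m → A := fun x => z (t + x)

lemma win_restr (z : ℤ → A) {m m' : ℕ} (h : m ≤ m') (t : ℤ) :
    win z m t = (fun x : Fin m => win z m' t (Fin.castLE h x)) := by
  funext x; simp [win]

lemma win_drop (z : ℤ → A) (m : ℕ) (t : ℤ) :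
    win z m (t + 1) = (fun x : Fin m => win z (m+1) t x.succ) := by
  funext x; simp [win]; ring_nf

/-- ending of the bi-infinite Morse-Hedlund argument -/
lemma final (z : ℤ → A) (K m : ℕ) (hm1 : 1 ≤ m) (hmK : m + 1 ≤ K)
    (fwd : ∀ t t' : ℤ, win z m t = win z m t' → win z m (t+1) = win z m (t'+1))
    (bwd : ∀ t t' : ℤ, win z m t = win z m t' → win z m (t-1) = win z m (t'-1))
    (t1 t2 : ℤ) (hlt : t1 < t2) (ht1 : t1 ∈ Finset.Icc (0:ℤ) K) (ht2 : t2 ∈ Finset.Icc (0:ℤ) K)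
    (hweq : win z m t1 = win z m t2) :
    ∃ ρ : ℕ, 1 ≤ ρ ∧ ρ ≤ K ∧ ∀ t : ℤ, z (t + ρ) = z t := by
  simp only [Finset.mem_Icc] at ht1 ht2
  set ρz : ℤ := t2 - t1 with hρz
  have hρ1 : 1 ≤ ρz := by omega
  have hρK : ρz ≤ K := by omega
  have prop : ∀ d : ℤ, win z m (t1 + d) = win z m (t1 + d + ρz) := by
    intro d
    induction d using Int.induction_on with
    | zero =>
      rw [add_zero, show t1 + ρz = t2 from by omega]; exact hweq
    | succ i ih =>
      have e1 : t1 + ((i:ℤ)+1) = t1 + ↑i + 1 := by ring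
      rw [e1]
      rw [show t1 + (i:ℤ) + 1 + ρz = t1 + ↑i + ρz + 1 from by ring]
      exact fwd _ _ ih
    | pred i ih =>
      have e1 : t1 + (-(i:ℤ)-1) = t1 + -↑i - 1 := by ring
      rw [e1]
      rw [show t1 + -(i:ℤ) - 1 + ρz = t1 + -↑i + ρz - 1 from by ring]
      exact bwd _ _ ih
  refine ⟨ρz.toNat, by omega, by omega, fun t => ?_⟩
  have hcast : (ρz.toNat : ℤ) = ρz := Int.toNat_of_nonneg (by omega)
  have := prop (t - t1)
  have e1 : t1 + (t - t1) = t := by ring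
  rw [e1] at this
  have := congrFun this ⟨0, by omega⟩
  simp only [win] at this
  rw [hcast]
  simpa using this.symm

/-- Bi-infinite Morse–Hedlund: a two-sided sequence with at most `K` factors of
length `K` is periodic with period at most `K`. -/
lemma biMH (z : ℤ → A) (K : ℕ) (hK : 1 ≤ K) (S : Set (Fin K → A)) (hSfin : S.Finite)
    (hcard : S.ncard ≤ K) (hmem : ∀ t : ℤ, win z K t ∈ S) :
    ∃ ρ : ℕ, 1 ≤ ρ ∧ ρ ≤ K ∧ ∀ t : ℤ, z (t + ρ) = z t := by
  classical
  set W : (m : ℕ) → Set (Fin m → A) := fun m => Set.range (win z m) with hW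
  have hWK : W K ⊆ S := by rintro f ⟨t, rfl⟩; exact hmem t
  have hWeq : ∀ m (h : m ≤ K), W m =
      (fun f : Fin K → A => fun x : Fin m => f (Fin.castLE h x)) '' (W K) := by
    intro m h
    ext f; constructor
    · rintro ⟨t, rfl⟩; exact ⟨win z K t, ⟨t, rfl⟩, (win_restr z h t).symm⟩
    · rintro ⟨g, ⟨t, rfl⟩, rfl⟩; exact ⟨t, win_restr z h t⟩
  have hfin : ∀ m, m ≤ K → (W m).Finite := by
    intro m h; rw [hWeq m h]; exact (hSfin.subset hWK).image _
  set c : ℕ → ℕ := fun m => (W m).ncard with hc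
  -- surjections
  have hsurj1 : ∀ m, m + 1 ≤ K → W m =
      (fun f : Fin (m+1) → A => fun x : Fin m => f (Fin.castLE (Nat.le_succ m) x)) '' (W (m+1)) := by
    intro m h
    ext f; constructor
    · rintro ⟨t, rfl⟩
      exact ⟨win z (m+1) t, ⟨t, rfl⟩, (win_restr z (Nat.le_succ m) t).symm⟩
    · rintro ⟨g, ⟨t, rfl⟩, rfl⟩; exact ⟨t, win_restr z (Nat.le_succ m) t⟩
  have hsurj2 : ∀ m, m + 1 ≤ K → W m =
      (fun f : Fin (m+1) → A => fun x : Fin m => f x.succ) '' (W (m+1)) := by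
    intro m h
    ext f; constructor
    · rintro ⟨t, rfl⟩
      refine ⟨win z (m+1) (t-1), ⟨t-1, rfl⟩, ?_⟩
      have := win_drop z m (t-1)
      simp only [sub_add_cancel] at this
      exact this.symm ▸ rfl
    · rintro ⟨g, ⟨t, rfl⟩, rfl⟩
      exact ⟨t + 1, win_drop z m t⟩
  have hmono : ∀ m, m + 1 ≤ K → c m ≤ c (m+1) := by
    intro m h
    rw [hc]; dsimp only
    rw [hsurj1 m h]
    exact Set.ncard_image_le (hfin (m+1) h)
  have hmono' : ∀ m m', m ≤ m' → m' ≤ K → c m ≤ c m' := by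
    intro m m' h h'
    induction m' with
    | zero => cases Nat.le_zero.mp h; exact le_refl _
    | succ k ih =>
      rcases Nat.eq_or_lt_of_le h with rfl | hlt
      · exact le_refl _
      · exact le_trans (ih (by omega) (by omega)) (hmono k h')
  have hcK : c K ≤ K := le_trans (Set.ncard_le_ncard hWK hSfin) hcard
  have hne1 : (W 1).Nonempty := ⟨win z 1 0, 0, rfl⟩
  by_cases h1 : c 1 ≤ 1
  · -- z is constant
    refine ⟨1, le_refl _, hK, fun t => ?_⟩
    have hsub := (Set.ncard_le_one (hfin 1 hK)).mp h1
    have := hsub (win z 1 (t+1)) ⟨t+1, rfl⟩ (win z 1 t) ⟨t, rfl⟩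
    have := congrFun this ⟨0, Nat.zero_lt_one⟩
    simpa [win] using this
  · push_neg at h1
    -- find m with c (m+1) ≤ c m
    have hex : ∃ m, 1 ≤ m ∧ m + 1 ≤ K ∧ c (m+1) ≤ c m := by
      by_contra hcon
      push_neg at hcon
      have grow : ∀ j, 1 ≤ j → j ≤ K → j + 1 ≤ c j := by
        intro j hj1 hjK
        induction j with
        | zero => omega
        | succ k ih =>
          rcases Nat.eq_or_lt_of_le hj1 with h | h
          · have hk0 : k = 0 := by omega
            subst hk0
            simp only [Nat.zero_add]
            omega
          · have hk : 1 ≤ k := by omega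
            have := hcon k hk (by omega)
            have := ih hk (by omega)
            omega
      have := grow K hK (le_refl K)
      omega
    obtain ⟨m, hm1, hmK, hle⟩ := hex
    have heq : c (m+1) = c m := le_antisymm hle (hmono m hmK)
    -- injectivity of the two maps on W (m+1)
    have hinj1 : Set.InjOn (fun f : Fin (m+1) → A => fun x : Fin m => f (Fin.castLE (Nat.le_succ m) x)) (W (m+1)) := by
      apply Set.injOn_of_ncard_image_eq _ (hfin (m+1) hmK)
      rw [← hsurj1 m hmK]; exact heq.symm
    have hinj2 : Set.InjOn (fun f : Fin (m+1) → A => fun x : Fin m => f x.succ) (W (m+1)) := by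
      apply Set.injOn_of_ncard_image_eq _ (hfin (m+1) hmK)
      rw [← hsurj2 m hmK]; exact heq.symm
    have fwd : ∀ t t' : ℤ, win z m t = win z m t' → win z m (t+1) = win z m (t'+1) := by
      intro t t' h
      rw [win_restr z (Nat.le_succ m) t, win_restr z (Nat.le_succ m) t'] at h
      have := hinj1 ⟨t, rfl⟩ ⟨t', rfl⟩ h
      rw [win_drop z m t, win_drop z m t', this]
    have bwd : ∀ t t' : ℤ, win z m t = win z m t' → win z m (t-1) = win z m (t'-1) := by
      intro t t' h
      have e1 : win z m ((t-1) + 1) = win z m ((t'-1) + 1) := by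
        simpa [sub_add_cancel] using h
      rw [win_drop z m (t-1), win_drop z m (t'-1)] at e1
      have := hinj2 ⟨t-1, rfl⟩ ⟨t'-1, rfl⟩ e1
      rw [win_restr z (Nat.le_succ m) (t-1), win_restr z (Nat.le_succ m) (t'-1), this]
    -- pigeonhole on positions 0..K
    have hcm : c m ≤ K := le_trans (hmono' m K (by omega) (le_refl K)) hcK
    obtain ⟨t1, ht1, t2, ht2, hne, hweq⟩ :
        ∃ t1 ∈ Finset.Icc (0:ℤ) K, ∃ t2 ∈ Finset.Icc (0:ℤ) K, t1 ≠ t2 ∧ win z m t1 = win z m t2 := by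
      apply Finset.exists_ne_map_eq_of_card_lt_of_maps_to (t := (hfin m (by omega)).toFinset)
      · rw [Int.card_Icc]
        have : ((hfin m (by omega)).toFinset).card = c m :=
          (Set.ncard_eq_toFinset_card _ (hfin m (by omega))).symm
        omega
      · intro a _; simp only [Finset.mem_coe, Set.Finite.mem_toFinset]; exact ⟨a, rfl⟩
    -- wlog t1 < t2
    rcases lt_or_gt_of_ne hne with hlt | hlt
    case _ =>
      exact final z K m hm1 hmK fwd bwd t1 t2 hlt (by simpa using ht1) (by simpa using ht2) hweq
    case _ =>
      exact final z K m hm1 hmK fwd bwd t2 t1 hlt (by simpa using ht2) (by simpa using ht1) hweq.symm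

lemma stepq (w : ℕ → A) (i j K : ℕ) (hij : i < j)
    (r : ∀ x, x < K → w (i + x) = w (j + x)) (b : ℕ) (hjb : j ≤ b) (hbK : b < j + K) :
    w (b - (j - i)) = w b := by
  have h1 : b - (j - i) = i + (b - j) := by omega
  have h2 : b = j + (b - j) := by omega
  rw [h1]
  conv_rhs => rw [h2]
  exact r (b - j) (by omega)

lemma quasi (w : ℕ → A) (i j K : ℕ) (hij : i < j)
    (r : ∀ x, x < K → w (i + x) = w (j + x)) :
    ∀ k a, i ≤ a → a + k * (j - i) < j + K → w a = w (a + k * (j - i)) := by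
  intro k
  induction k with
  | zero => intro a _ _; simp
  | succ k ih =>
    intro a ha hb
    have hmul : (k+1) * (j-i) = k * (j-i) + (j-i) := by ring
    rw [hmul] at hb ⊢
    have hq1 : 1 ≤ j - i := by omega
    have h1 : a + k * (j - i) < j + K := by omega
    have e1 := ih a ha h1
    have hjb : j ≤ a + k * (j - i) + (j - i) := by omega
    have e2 := stepq w i j K hij r (a + k * (j - i) + (j - i)) hjb (by omega)
    have e3 : a + k * (j - i) + (j - i) - (j - i) = a + k * (j - i) := by omega
    rw [e3] at e2
    rw [← add_assoc] at *
    exact e1.trans e2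

/-- two positions in the overlap window congruent mod the period give equal letters -/
lemma quasiE (w : ℕ → A) (i j K : ℕ) (hij : i < j)
    (r : ∀ x, x < K → w (i + x) = w (j + x))
    (a b : ℕ) (ha : i ≤ a) (hb : i ≤ b) (haK : a < j + K) (hbK : b < j + K)
    (hdvd : ((j - i : ℕ) : ℤ) ∣ (a : ℤ) - (b : ℤ)) : w a = w b := by
  have main : ∀ a b : ℕ, i ≤ a → a ≤ b → b < j + K →
      ((j - i : ℕ) : ℤ) ∣ (b : ℤ) - (a : ℤ) → w a = w b := by
    intro a b ha hab hbK hd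
    have h2 : ((b - a : ℕ) : ℤ) = (b:ℤ) - a := by omega
    have h4 : ((j-i:ℕ):ℤ) ∣ ((b-a:ℕ):ℤ) := by rw [h2]; exact hd
    have h5 : (j - i) ∣ (b - a) := by exact_mod_cast h4
    obtain ⟨k, hk⟩ := h5
    have hb' : b = a + k * (j - i) := by
      have h0 : a + (b - a) = b := by omega
      rw [← h0, hk, mul_comm]
    rw [hb']
    exact quasi w i j K hij r k a ha (by rw [← hb']; exact hbK)
  rcases le_total a b with h | h
  · refine main a b ha h hbK ?_
    obtain ⟨c, hc⟩ := hdvd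
    exact ⟨-c, by rw [mul_neg, ← hc]; ring⟩
  · exact (main b a hb h haK hdvd).symm


lemma span [Fintype A] (w : ℕ → A) (K n : ℕ) (hK : 1 ≤ K)
    (S : Set (Fin K → A)) (hcard : S.ncard ≤ K)
    (hmem : ∀ i, i + K ≤ n → (fun x : Fin K => w (i + ↑x)) ∈ S)
    (i1 j1 i2 j2 : ℕ) (h11 : i1 < j1) (h22 : i2 < j2) (h12 : i1 ≤ i2) (hjj : j1 ≤ j2)
    (hn : j2 + K ≤ n)
    (r1 : ∀ x, x < K → w (i1 + x) = w (j1 + x))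
    (r2 : ∀ x, x < K → w (i2 + x) = w (j2 + x)) :
    ∃ ρ, 1 ≤ ρ ∧ ρ ≤ K ∧ ∀ s, i1 ≤ s → s + ρ < j2 + K → w s = w (s + ρ) := by
  classical
  set q1 : ℕ := j1 - i1 with hq1
  set q2 : ℕ := j2 - i2 with hq2
  have hq1p : 0 < q1 := by omega
  have hq2p : 0 < q2 := by omega
  set z : ℤ → A := fun t =>
    if t < (i1:ℤ) then w (i1 + ((t - (i1:ℤ)) % (q1:ℤ)).toNat)
    else if t < (j2:ℤ) + (K:ℤ) then w t.toNat
    else w (i2 + K + ((t - (i2:ℤ) - (K:ℤ)) % (q2:ℤ)).toNat) with hz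
  -- basic emod facts
  have dv : ∀ (q : ℕ), 0 < q → ∀ u : ℤ, ((q:ℤ) ∣ u % (q:ℤ) - u) ∧ 0 ≤ u % (q:ℤ) ∧ u % (q:ℤ) < q := by
    intro q hq u
    refine ⟨⟨-(u / (q:ℤ)), by rw [Int.emod_def]; ring⟩, Int.emod_nonneg u (by exact_mod_cast hq.ne'), Int.emod_lt_of_pos u (by exact_mod_cast hq)⟩
  -- the central window lemma
  have winlem : ∀ t : ℤ, ∃ s : ℕ, s + K ≤ n ∧ win z K t = (fun x : Fin K => w (s + ↑x)) := by
    intro t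
    rcases lt_trichotomy t (i1:ℤ) with ht | hts
    · -- left zone
      obtain ⟨hd, hr0, hrq⟩ := dv q1 hq1p (t - (i1:ℤ))
      set r : ℤ := (t - (i1:ℤ)) % (q1:ℤ) with hrdef
      refine ⟨i1 + r.toNat, by omega, ?_⟩
      funext x
      have hxK : (x:ℕ) < K := x.isLt
      show z (t + (x:ℕ)) = w (i1 + r.toNat + (x:ℕ))
      by_cases hx : t + (x:ℕ) < (i1:ℤ)
      · -- still left zone
        obtain ⟨hd2, hr20, hr2q⟩ := dv q1 hq1p (t + (x:ℕ) - (i1:ℤ))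
        have hzv : z (t + (x:ℕ)) = w (i1 + ((t + (x:ℕ) - (i1:ℤ)) % (q1:ℤ)).toNat) := by
          rw [hz]; simp only [if_pos hx]
        rw [hzv]
        apply quasiE w i1 j1 K h11 r1 _ _ (by omega) (by omega) (by omega) (by omega)
        -- divisibility
        obtain ⟨c1, hc1⟩ := hd2
        obtain ⟨c2, hc2⟩ := hd
        refine ⟨c1 - c2, ?_⟩
        push_cast
        rw [Int.toNat_of_nonneg hr20, Int.toNat_of_nonneg hr0]
        rw [mul_sub, ← hc1, ← hc2]
        ring
      · -- middle zone
        push_neg at hx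
        have hmid : t + (x:ℕ) < (j2:ℤ) + (K:ℤ) := by omega
        have hzv : z (t + (x:ℕ)) = w ((t + (x:ℕ)).toNat) := by
          rw [hz]; simp only [if_neg (not_lt.mpr hx), if_pos hmid]
        rw [hzv]
        apply quasiE w i1 j1 K h11 r1 _ _ (by omega) (by omega) (by omega) (by omega)
        obtain ⟨c2, hc2⟩ := hd
        refine ⟨-c2, ?_⟩
        push_cast
        rw [Int.toNat_of_nonneg (by omega : (0:ℤ) ≤ t + (x:ℕ)), Int.toNat_of_nonneg hr0]
        rw [mul_neg, ← hc2]
        ring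
    · rcases le_or_gt t (j2:ℤ) with htj | htj
      · -- middle zone
        refine ⟨t.toNat, by omega, ?_⟩
        funext x
        have hxK : (x:ℕ) < K := x.isLt
        show z (t + (x:ℕ)) = w (t.toNat + (x:ℕ))
        have h1 : ¬ (t + (x:ℕ) < (i1:ℤ)) := by omega
        have h2 : t + (x:ℕ) < (j2:ℤ) + (K:ℤ) := by omega
        have hzv : z (t + (x:ℕ)) = w ((t + (x:ℕ)).toNat) := by
          rw [hz]; simp only [if_neg h1, if_pos h2]
        rw [hzv]
        congr 1
        omega
      · -- right zone
        obtain ⟨hd, hr0, hrq⟩ := dv q2 hq2p (t - (i2:ℤ) - 1)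
        set r : ℤ := (t - (i2:ℤ) - 1) % (q2:ℤ) with hrdef
        refine ⟨i2 + 1 + r.toNat, by omega, ?_⟩
        funext x
        have hxK : (x:ℕ) < K := x.isLt
        show z (t + (x:ℕ)) = w (i2 + 1 + r.toNat + (x:ℕ))
        have h1 : ¬ (t + (x:ℕ) < (i1:ℤ)) := by omega
        by_cases hx : t + (x:ℕ) < (j2:ℤ) + (K:ℤ)
        · -- middle branch
          have hzv : z (t + (x:ℕ)) = w ((t + (x:ℕ)).toNat) := by
            rw [hz]; simp only [if_neg h1, if_pos hx]
          rw [hzv]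
          apply quasiE w i2 j2 K h22 r2 _ _ (by omega) (by omega) (by omega) (by omega)
          obtain ⟨c2, hc2⟩ := hd
          refine ⟨-c2, ?_⟩
          push_cast
          rw [Int.toNat_of_nonneg (by omega : (0:ℤ) ≤ t + (x:ℕ)), Int.toNat_of_nonneg hr0]
          rw [mul_neg, ← hc2]
          ring
        · -- right branch
          obtain ⟨hd2, hr20, hr2q⟩ := dv q2 hq2p (t + (x:ℕ) - (i2:ℤ) - (K:ℤ))
          have hzv : z (t + (x:ℕ)) = w (i2 + K + ((t + (x:ℕ) - (i2:ℤ) - (K:ℤ)) % (q2:ℤ)).toNat) := by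
            rw [hz]; simp only [if_neg h1, if_neg hx]
          rw [hzv]
          apply quasiE w i2 j2 K h22 r2 _ _ (by omega) (by omega) (by omega) (by omega)
          obtain ⟨c1, hc1⟩ := hd2
          obtain ⟨c2, hc2⟩ := hd
          refine ⟨c1 - c2, ?_⟩
          push_cast
          rw [Int.toNat_of_nonneg hr20, Int.toNat_of_nonneg hr0]
          rw [mul_sub, ← hc1, ← hc2]
          ring
  -- apply biMH
  have hzmem : ∀ t : ℤ, win z K t ∈ S := by
    intro t
    obtain ⟨s, hs, he⟩ := winlem t
    rw [he]
    exact hmem s hs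
  obtain ⟨ρ, hρ1, hρK, hper⟩ := biMH z K hK S (Set.toFinite S) hcard hzmem
  refine ⟨ρ, hρ1, hρK, fun s hs1 hs2 => ?_⟩
  have e1 : z (s:ℤ) = w s := by
    rw [hz]
    simp only [if_neg (by omega : ¬ ((s:ℤ) < (i1:ℤ))), if_pos (by omega : (s:ℤ) < (j2:ℤ) + (K:ℤ))]
    congr 1
  have e2 : z ((s:ℤ) + (ρ:ℤ)) = w (s + ρ) := by
    rw [hz]
    simp only [if_neg (by omega : ¬ ((s:ℤ) + (ρ:ℤ) < (i1:ℤ))), if_pos (by omega : (s:ℤ) + (ρ:ℤ) < (j2:ℤ) + (K:ℤ))]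
    congr 1
  rw [← e1, ← e2]
  exact (hper (s:ℤ)).symm

lemma ncard_le_fintype {α β : Type*} [Fintype β] (s : Set α) (f : α → β)
    (hinj : Set.InjOn f s) : s.ncard ≤ Fintype.card β := by
  calc s.ncard = (f '' s).ncard := (Set.ncard_image_of_injOn hinj).symm
    _ ≤ (Set.univ : Set β).ncard := Set.ncard_le_ncard (Set.subset_univ _) Set.finite_univ
    _ = Fintype.card β := by rw [Set.ncard_univ, Nat.card_eq_fintype_card]

lemma finite_len {A : Type*} [Fintype A] (m : ℕ) : {l : List A | l.length = m}.Finite := by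
  have h : {l : List A | l.length = m} = Set.range (List.ofFn : (Fin m → A) → List A) := by
    ext l
    constructor
    · intro hl
      simp only [Set.mem_setOf_eq] at hl
      subst hl
      exact ⟨fun i => l[(i:ℕ)], List.ofFn_getElem⟩
    · rintro ⟨f, rfl⟩
      simp [List.length_ofFn]
  rw [h]
  exact Set.finite_range _

lemma ofFn_window {A : Type*} (l : List A) (a0 : A) (i K : ℕ) (h : i + K ≤ l.length) :
    List.ofFn (fun x : Fin K => l.getD (i + ↑x) a0) = (l.drop i).take K := by
  apply List.ext_getElem
  · simp only [List.length_ofFn, List.length_take, List.length_drop]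
    omega
  · intro p h1 h2
    rw [List.getElem_ofFn]
    rw [List.getElem_take, List.getElem_drop]
    rw [List.getD_eq_getElem _ _ (by simp only [List.length_ofFn] at h1; omega : i + ↑(⟨p, by simpa using h1⟩ : Fin K) < l.length)]

end Stmt14

open Stmt14 in
/-- Balogh–Bollobás.  If `P` is a downset of finite words over a finite
alphabet `A` in the subword (contiguous factor) ordering, then `f_P` is either
bounded or satisfies `f_P(n) ≥ n + 1` for every `n ≥ 1`. -/
theorem stmt_14 {A : Type*} [Fintype A] (P : Set (List A))
    (hdown : ∀ u v : List A, u <:+: v → v ∈ P → u ∈ P) :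
    (∃ C : ℕ, ∀ n : ℕ, {w ∈ P | w.length = n}.ncard ≤ C) ∨
    (∀ n : ℕ, 1 ≤ n → n + 1 ≤ {w ∈ P | w.length = n}.ncard) := by
  classical
  by_cases H : ∀ n : ℕ, 1 ≤ n → n + 1 ≤ {w ∈ P | w.length = n}.ncard
  · exact Or.inr H
  left
  push_neg at H
  obtain ⟨K, hK1, hKcard⟩ := H
  have hfinS : ∀ m : ℕ, {w ∈ P | w.length = m}.Finite := fun m =>
    (finite_len m).subset (fun l hl => hl.2)
  have hPK : {w ∈ P | w.length = K}.ncard ≤ K := by omega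
  refine ⟨(K + 1) * (Fintype.card A + 1) ^ (4 * K), fun n => ?_⟩
  rcases le_or_gt n (3 * K) with hn3 | hn3
  · -- small lengths: crude bound
    have h1 : {w ∈ P | w.length = n}.ncard ≤ {l : List A | l.length = n}.ncard :=
      Set.ncard_le_ncard (fun l hl => hl.2) (finite_len n)
    have h2 : {l : List A | l.length = n}.ncard ≤ Fintype.card (Fin n → A) := by
      have hr : {l : List A | l.length = n} = (List.ofFn : (Fin n → A) → List A) '' Set.univ := by
        rw [Set.image_univ]
        ext l
        constructor
        · intro hl
          simp only [Set.mem_setOf_eq] at hl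
          subst hl
          exact ⟨fun i => l[(i:ℕ)], List.ofFn_getElem⟩
        · rintro ⟨f, rfl⟩
          simp [List.length_ofFn]
      rw [hr]
      calc ((List.ofFn : (Fin n → A) → List A) '' Set.univ).ncard
          ≤ (Set.univ : Set (Fin n → A)).ncard := Set.ncard_image_le Set.finite_univ
        _ = Fintype.card (Fin n → A) := by rw [Set.ncard_univ, Nat.card_eq_fintype_card]
    have h3 : Fintype.card (Fin n → A) = (Fintype.card A) ^ n := by
      simp [Fintype.card_fun]
    have h4 : (Fintype.card A) ^ n ≤ (Fintype.card A + 1) ^ (4 * K) :=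
      le_trans (Nat.pow_le_pow_left (by omega) n)
        (Nat.pow_le_pow_right (by omega) (by omega))
    have h5 : (Fintype.card A + 1) ^ (4 * K) ≤ (K + 1) * (Fintype.card A + 1) ^ (4 * K) :=
      Nat.le_mul_of_pos_left _ (by omega)
    omega
  · -- large lengths
    rcases isEmpty_or_nonempty A with hA | hA
    · have : {w ∈ P | w.length = n} = ∅ := by
        ext l
        simp only [Set.mem_setOf_eq, Set.mem_empty_iff_false, iff_false, not_and]
        intro _ hlen
        cases l with
        | nil => simp only [List.length_nil] at hlen; omega
        | cons a _ => exact hA.false a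
      rw [this]
      simp
    · obtain ⟨a0⟩ := hA
      set fw : List A → ℕ → A := fun l i => l.getD i a0 with hfw
      set Sn := {w ∈ P | w.length = n} with hSn
      -- key property: each word in Sn is eventually periodic in the middle
      have key : ∀ l ∈ Sn, ∃ ρ, 1 ≤ ρ ∧ ρ ≤ K ∧
          ∀ s, K - 1 ≤ s → s + ρ ≤ n - K → fw l s = fw l (s + ρ) := by
        intro l hl
        obtain ⟨hlP, hllen⟩ := hl
        set SW : Set (Fin K → A) := {g | List.ofFn g ∈ P} with hSW
        have hSWcard : SW.ncard ≤ K := by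
          have h1 : SW.ncard = ((List.ofFn : (Fin K → A) → List A) '' SW).ncard :=
            (Set.ncard_image_of_injOn (List.ofFn_injective.injOn)).symm
          have h2 : (List.ofFn : (Fin K → A) → List A) '' SW ⊆ {w ∈ P | w.length = K} := by
            rintro _ ⟨g, hg, rfl⟩
            exact ⟨hg, List.length_ofFn⟩
          calc SW.ncard = _ := h1
            _ ≤ {w ∈ P | w.length = K}.ncard := Set.ncard_le_ncard h2 (hfinS K)
            _ ≤ K := hPK
        have hwmem : ∀ i, i + K ≤ n → (fun x : Fin K => fw l (i + ↑x)) ∈ SW := by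
          intro i hi
          show List.ofFn (fun x : Fin K => fw l (i + ↑x)) ∈ P
          rw [hfw]
          rw [ofFn_window l a0 i K (by omega)]
          refine hdown _ l ?_ hlP
          exact ((List.take_prefix K (l.drop i)).isInfix).trans ((List.drop_suffix i l).isInfix)
        -- pigeonhole for repeated windows
        have pigeon : ∀ off, off + K + K ≤ n → ∃ i j, off ≤ i ∧ i < j ∧ j ≤ off + K ∧
            ∀ x, x < K → fw l (i + x) = fw l (j + x) := by
          intro off hoff
          have hSWfin : SW.Finite := Set.toFinite _
          obtain ⟨i, hi, j, hj, hne, heq⟩ :=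
            Finset.exists_ne_map_eq_of_card_lt_of_maps_to
              (s := Finset.Icc off (off + K)) (t := hSWfin.toFinset)
              (by
                rw [Nat.card_Icc]
                have : hSWfin.toFinset.card = SW.ncard :=
                  (Set.ncard_eq_toFinset_card _ hSWfin).symm
                omega)
              (f := fun i => fun x : Fin K => fw l (i + ↑x))
              (by
                intro i hi
                simp only [Finset.mem_coe, Set.Finite.mem_toFinset]
                simp only [Finset.mem_coe, Finset.mem_Icc] at hi
                exact hwmem i (by omega))
          simp only [Finset.mem_Icc] at hi hj
          rcases lt_or_gt_of_ne hne with hlt | hlt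
          · exact ⟨i, j, hi.1, hlt, hj.2, fun x hx => congrFun heq ⟨x, hx⟩⟩
          · exact ⟨j, i, hj.1, hlt, hi.2, fun x hx => congrFun heq.symm ⟨x, hx⟩⟩
        obtain ⟨i1, j1, hi1, hij1, hj1, r1⟩ := pigeon 0 (by omega)
        obtain ⟨i2, j2, hi2, hij2, hj2, r2⟩ := pigeon (n - 2 * K) (by omega)
        obtain ⟨ρ, hρ1, hρK, hper⟩ :=
          span (fw l) K n hK1 SW hSWcard hwmem i1 j1 i2 j2 hij1 hij2
            (by omega) (by omega) (by omega) r1 r2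
        refine ⟨ρ, hρ1, hρK, fun s hs1 hs2 => ?_⟩
        exact hper s (by omega) (by omega)
      -- choose the period for each word
      choose! ρf hρ1 hρK hρper using key
      -- encoding map
      set Φ : List A → (Fin (2 * K) → A) × (Fin (2 * K) → A) × Fin (K + 1) :=
        fun l => (fun x => fw l ↑x, fun x => fw l (n - 2 * K + ↑x),
          ⟨if l ∈ Sn then ρf l else 0, by
            by_cases h : l ∈ Sn
            · rw [if_pos h]; exact Nat.lt_succ_of_le (hρK l h)
            · rw [if_neg h]; omega⟩) with hΦ
      have hinj : Set.InjOn Φ Sn := by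
        intro l hl l' hl' he
        have hlen : l.length = n := hl.2
        have hlen' : l'.length = n := hl'.2
        obtain ⟨he1, he2, he3⟩ : (fun x : Fin (2*K) => fw l ↑x) = (fun x : Fin (2*K) => fw l' ↑x) ∧
            (fun x : Fin (2*K) => fw l (n - 2*K + ↑x)) = (fun x : Fin (2*K) => fw l' (n - 2*K + ↑x)) ∧
            ρf l = ρf l' := by
          rw [hΦ] at he
          simp only [Prod.mk.injEq, Fin.mk.injEq, if_pos hl, if_pos hl'] at he
          exact ⟨he.1, he.2.1, he.2.2⟩
        have main : ∀ p, p < n → fw l p = fw l' p := by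
          intro p
          induction p using Nat.strong_induction_on with
          | _ p ih =>
            intro hp
            rcases lt_or_ge p (2 * K) with hp2 | hp2
            · have := congrFun he1 ⟨p, hp2⟩
              simpa using this
            · rcases le_or_gt p (n - K) with hpn | hpn
              · -- periodic zone
                set ρ := ρf l with hρdef
                have hρ1' : 1 ≤ ρ := hρ1 l hl
                have hρK' : ρ ≤ K := hρK l hl
                have e1 : fw l (p - ρ) = fw l p := by
                  have := hρper l hl (p - ρ) (by omega) (by omega)
                  rwa [show p - ρ + ρ = p from by omega] at this
                have e2 : fw l' (p - ρ) = fw l' p := by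
                  have := hρper l' hl' (p - ρ) (by omega) (by omega)
                  rwa [← he3, show p - ρ + ρ = p from by omega] at this
                rw [← e1, ← e2]
                exact ih (p - ρ) (by omega) (by omega)
              · -- suffix zone
                have hx : p - (n - 2*K) < 2*K := by omega
                have := congrFun he2 ⟨p - (n - 2*K), hx⟩
                simp only at this
                rwa [show n - 2*K + (p - (n - 2*K)) = p from by omega] at this
        apply List.ext_getElem (by omega)
        intro p h1 h2
        have := main p (by omega)
        rw [hfw] at this
        simp only at this
        rwa [List.getD_eq_getElem _ _ (by omega : p < l.length),
          List.getD_eq_getElem _ _ (by omega : p < l'.length)] at this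
      have hcount : Sn.ncard ≤ Fintype.card ((Fin (2 * K) → A) × (Fin (2 * K) → A) × Fin (K + 1)) :=
        ncard_le_fintype Sn Φ hinj
      have hcard2 : Fintype.card ((Fin (2 * K) → A) × (Fin (2 * K) → A) × Fin (K + 1)) =
          (Fintype.card A) ^ (2*K) * ((Fintype.card A) ^ (2*K) * (K+1)) := by
        simp [Fintype.card_prod, Fintype.card_fun]
      have harith : (Fintype.card A) ^ (2*K) * ((Fintype.card A) ^ (2*K) * (K+1)) ≤
          (K + 1) * (Fintype.card A + 1) ^ (4 * K) := by
        have h1 : (Fintype.card A) ^ (2*K) * (Fintype.card A) ^ (2*K) = (Fintype.card A) ^ (4*K) := by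
          rw [← pow_add]
          congr 1
          omega
        have h2 : (Fintype.card A) ^ (4*K) ≤ (Fintype.card A + 1) ^ (4*K) :=
          Nat.pow_le_pow_left (by omega) _
        calc (Fintype.card A) ^ (2*K) * ((Fintype.card A) ^ (2*K) * (K+1))
            = ((Fintype.card A) ^ (2*K) * (Fintype.card A) ^ (2*K)) * (K+1) := by ring
          _ = (Fintype.card A) ^ (4*K) * (K+1) := by rw [h1]
          _ ≤ (Fintype.card A + 1) ^ (4*K) * (K+1) := Nat.mul_le_mul_right _ h2
          _ = (K + 1) * (Fintype.card A + 1) ^ (4 * K) := by ring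
      omega
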